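/- Let G be a finite, connected graph that is not balanced-bipartite, and let w ∈ Λ be a non-unstable equilibrium. Then for every initial point v^0 in the interior of Δ (all coordinates strictly positive), the solution v(t) of the ODE dv/dt = F(v) with v(0) = v^0 converges to w as t → ∞. -/

import Mathlib

open MeasureTheory Filter Finset Topology

noncomputable section

namespace GPU

variable {m : ℕ}

/-- The vector field `F` of the ODE associated to the generalized Pólya urn,
`F_i(x) = -x_i + (1/N) ∑_{j ~ i} x_i/(x_i+x_j)` where `N` is the number of edges. -/
def polyaF (G : SimpleGraph (Fin m)) [DecidableRel G.Adj] (x : Fin m → ℝ) : Fin m → ℝ :=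
  fun i => -x i + (1 / (G.edgeFinset.card : ℝ)) * ∑ j ∈ G.neighborFinset i, x i / (x i + x j)

/-- The domain `Δ`. -/
def simplexDelta (G : SimpleGraph (Fin m)) (c : ℝ) : Set (Fin m → ℝ) :=
  {x | (∀ i, 0 ≤ x i) ∧ ∑ i, x i = 1 ∧ ∀ i j, G.Adj i j → c ≤ x i + x j}

/-- The equilibria set `Λ = {x ∈ Δ : F(x) = 0}`. -/
def equilibria (G : SimpleGraph (Fin m)) [DecidableRel G.Adj] (c : ℝ) : Set (Fin m → ℝ) :=
  {x | x ∈ simplexDelta G c ∧ polyaF G x = 0}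

/-- The Lyapunov function `L(v) = -∑ v_i + (1/N) ∑_{{i,j} ∈ E} log (v_i + v_j)`. -/
def polyaL (G : SimpleGraph (Fin m)) [DecidableRel G.Adj] (v : Fin m → ℝ) : ℝ :=
  -∑ i, v i + (1 / (G.edgeFinset.card : ℝ)) *
    ∑ e ∈ G.edgeFinset,
      Sym2.lift ⟨fun i j => Real.log (v i + v j), fun i j => by simp [add_comm]⟩ e

/-- The partial derivative `∂L/∂v_i = -1 + (1/N) ∑_{j ~ i} 1/(v_i+v_j)`. -/
def partialL (G : SimpleGraph (Fin m)) [DecidableRel G.Adj] (v : Fin m → ℝ) (i : Fin m) : ℝ :=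
  -1 + (1 / (G.edgeFinset.card : ℝ)) * ∑ j ∈ G.neighborFinset i, 1 / (v i + v j)

/-- The Jacobian matrix `JF(v)` of `F` at `v`. -/
def polyaJacobian (G : SimpleGraph (Fin m)) [DecidableRel G.Adj] (v : Fin m → ℝ) :
    Matrix (Fin m) (Fin m) ℝ :=
  Matrix.of fun i j => fderiv ℝ (fun x => polyaF G x i) v (Pi.single j 1)

/-- A point is unstable if its Jacobian matrix has an eigenvalue with strictly
positive real part. -/
def Unstable (G : SimpleGraph (Fin m)) [DecidableRel G.Adj] (v : Fin m → ℝ) : Prop :=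
  ∃ z : ℂ, z ∈ spectrum ℂ ((polyaJacobian G v).map Complex.ofReal) ∧ 0 < z.re

/-- `G` is balanced-bipartite if it admits a bipartition `V = A ∪ Aᶜ` with `#A = #Aᶜ`. -/
def BalancedBipartite (G : SimpleGraph (Fin m)) : Prop :=
  ∃ A : Finset (Fin m), (∀ i j, G.Adj i j → (i ∈ A ↔ j ∉ A)) ∧ A.card = Aᶜ.card

/-- The generalized Pólya urn process on `G`: at each step, for each edge `{i,j}` one
ball is added either to bin `i` or to bin `j`; conditionally on the past the ball goes
to `i` with probability `B_i(n)/(B_i(n)+B_j(n))` and the choices for distinct edges are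
conditionally independent (encoded by the product form of `condLaw`). -/
structure PolyaUrn (G : SimpleGraph (Fin m)) [DecidableRel G.Adj]
    (Ω : Type) [mΩ : MeasurableSpace Ω] (μ : Measure Ω) where
  /-- initial number of balls in each bin -/
  B₀ : Fin m → ℕ
  B₀_pos : ∀ i, 1 ≤ B₀ i
  /-- the filtration of the process -/
  ℱ : Filtration ℕ mΩ
  /-- `δ (n+1) i j` is the indicator that the ball added on edge `{i,j}` at step `n+1`
  goes to bin `i` -/
  δ : ℕ → Fin m → Fin m → Ω → ℕ
  /-- number of balls in each bin after step `n` -/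
  B : ℕ → Ω → Fin m → ℕ
  B_init : ∀ ω i, B 0 ω i = B₀ i
  B_step : ∀ n ω i, B (n + 1) ω i = B n ω i + ∑ j ∈ G.neighborFinset i, δ (n + 1) i j ω
  δ_sum : ∀ n i j ω, G.Adj i j → δ (n + 1) i j ω + δ (n + 1) j i ω = 1
  B_meas : ∀ n i, Measurable[ℱ n] fun ω => B n ω i
  δ_meas : ∀ n i j, Measurable[ℱ (n + 1)] fun ω => δ (n + 1) i j ω
  condLaw : ∀ n (s : Fin m → Fin m → ℕ),
    (μ[Set.indicator {ω | ∀ i j, G.Adj i j → i < j → δ (n + 1) i j ω = s i j}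
        (fun _ => (1 : ℝ)) | ℱ n])
      =ᵐ[μ] fun ω => ∏ i, ∏ j ∈ (G.neighborFinset i).filter (fun j => i < j),
        (if s i j = 1 then (B n ω i : ℝ) / ((B n ω i : ℝ) + (B n ω j : ℝ))
         else if s i j = 0 then (B n ω j : ℝ) / ((B n ω i : ℝ) + (B n ω j : ℝ)) else 0)

/-- The proportion of balls in each bin, `x_i(n) = B_i(n)/(N₀ + nN)`. -/
def PolyaUrn.x {G : SimpleGraph (Fin m)} [DecidableRel G.Adj] {Ω : Type}
    [mΩ : MeasurableSpace Ω] {μ : Measure Ω} (U : PolyaUrn G Ω μ) (n : ℕ) (ω : Ω) :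
    Fin m → ℝ :=
  fun i => (U.B n ω i : ℝ) / ((∑ j, U.B₀ j + n * G.edgeFinset.card : ℕ) : ℝ)

section Stage1
open Finset
variable {m : ℕ} (G : SimpleGraph (Fin m)) [DecidableRel G.Adj]

lemma edge_sum_aux (f : Fin m → Fin m → ℝ) :
    ∑ i, ∑ j ∈ G.neighborFinset i, f i j =
      ∑ e ∈ G.edgeFinset,
        Sym2.lift ⟨fun i j => f i j + f j i, fun i j => add_comm _ _⟩ e := by
  classical
  rw [Finset.sum_sigma']
  rw [← Finset.sum_fiberwise_of_maps_to (g := fun p : Σ _ : Fin m, Fin m => s(p.1, p.2))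
    (t := G.edgeFinset) ?hmap]
  case hmap =>
    rintro ⟨i, j⟩ hp
    simp only [Finset.mem_sigma, Finset.mem_univ, true_and, SimpleGraph.mem_neighborFinset] at hp
    simpa [SimpleGraph.mem_edgeFinset] using hp
  refine Finset.sum_congr rfl ?_
  intro e he
  rw [SimpleGraph.mem_edgeFinset] at he
  induction e with
  | _ i j =>
    have hadj : G.Adj i j := he
    have hne : i ≠ j := hadj.ne
    have hfilter : ((Finset.univ.sigma fun i => G.neighborFinset i).filter
        (fun p : Σ _ : Fin m, Fin m => s(p.1, p.2) = s(i, j)))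
        = {⟨i, j⟩, ⟨j, i⟩} := by
      ext ⟨a, b⟩
      simp only [Finset.mem_filter, Finset.mem_sigma, Finset.mem_univ, true_and,
        SimpleGraph.mem_neighborFinset, Finset.mem_insert, Finset.mem_singleton,
        Sym2.eq_iff]
      constructor
      · rintro ⟨-, (⟨rfl, rfl⟩ | ⟨rfl, rfl⟩)⟩
        · left; rfl
        · right; rfl
      · rintro (h | h) <;> cases h <;> simp [hadj, hadj.symm]
    rw [hfilter]
    rw [Finset.sum_insert (by simp [hne])]
    simp [Sym2.lift_mk]

variable {G}

lemma pair_pos {c : ℝ} (hc : 0 < c) {x : Fin m → ℝ} (hx : x ∈ simplexDelta G c)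
    {i j : Fin m} (h : G.Adj i j) : 0 < x i + x j :=
  lt_of_lt_of_le hc (hx.2.2 i j h)

lemma F_eq_mul (x : Fin m → ℝ) (i : Fin m) : polyaF G x i = x i * partialL G x i := by
  unfold polyaF partialL
  have h : ∀ j ∈ G.neighborFinset i, x i / (x i + x j) = x i * (1 / (x i + x j)) := by
    intro j _; rw [mul_one_div]
  rw [Finset.sum_congr rfl h, ← Finset.mul_sum]
  ring

lemma sum_F (hN : 0 < G.edgeFinset.card) {c : ℝ} (hc : 0 < c) {x : Fin m → ℝ}
    (hx : x ∈ simplexDelta G c) : ∑ i, polyaF G x i = 0 := by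
  unfold polyaF
  rw [Finset.sum_add_distrib, ← Finset.mul_sum,
    edge_sum_aux G (fun i j => x i / (x i + x j))]
  have hedges : ∑ e ∈ G.edgeFinset,
      Sym2.lift ⟨fun i j => x i / (x i + x j) + x j / (x j + x i),
        fun i j => add_comm _ _⟩ e = (G.edgeFinset.card : ℝ) := by
    rw [Finset.sum_congr rfl (fun e he => ?_), Finset.sum_const, nsmul_eq_mul, mul_one]
    rw [SimpleGraph.mem_edgeFinset] at he
    induction e with
    | _ i j =>
      have hadj : G.Adj i j := he
      have hp : 0 < x i + x j := pair_pos hc hx hadj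
      rw [Sym2.lift_mk]
      simp only
      rw [add_comm (x j) (x i), ← add_div, div_self hp.ne']
  rw [hedges, one_div, inv_mul_cancel₀ (by positivity : (G.edgeFinset.card : ℝ) ≠ 0)]
  have h1 : ∑ i, -x i = -1 := by rw [Finset.sum_neg_distrib, hx.2.1]
  rw [h1]; norm_num

end Stage1
section Stage2
open Finset
variable {m : ℕ} {G : SimpleGraph (Fin m)} [DecidableRel G.Adj]

lemma grad_identity (x y : Fin m → ℝ) :
    ∑ i, (y i - x i) * partialL G x i
      = -((∑ i, y i) - ∑ i, x i) + (1 / (G.edgeFinset.card : ℝ)) *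
        ∑ e ∈ G.edgeFinset,
          Sym2.lift ⟨fun i j => ((y i + y j) - (x i + x j)) / (x i + x j),
            fun i j => by simp [add_comm]⟩ e := by
  classical
  have key : ∑ i, ∑ j ∈ G.neighborFinset i, (y i - x i) / (x i + x j)
      = ∑ e ∈ G.edgeFinset,
          Sym2.lift ⟨fun i j => ((y i + y j) - (x i + x j)) / (x i + x j),
            fun i j => by simp [add_comm]⟩ e := by
    rw [edge_sum_aux G (fun i j => (y i - x i) / (x i + x j))]
    refine Finset.sum_congr rfl fun e _ => ?_
    induction e with
    | _ i j =>
      rw [Sym2.lift_mk, Sym2.lift_mk]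
      simp only
      rw [add_comm (x j) (x i), ← add_div]
      ring_nf
  rw [← key]
  unfold partialL
  have h : ∀ i, (y i - x i) * (-1 + 1 / (G.edgeFinset.card : ℝ) *
        ∑ j ∈ G.neighborFinset i, 1 / (x i + x j))
      = -(y i - x i) + 1 / (G.edgeFinset.card : ℝ) *
        ∑ j ∈ G.neighborFinset i, (y i - x i) / (x i + x j) := by
    intro i
    have hS : ∑ j ∈ G.neighborFinset i, (y i - x i) / (x i + x j)
        = (y i - x i) * ∑ j ∈ G.neighborFinset i, 1 / (x i + x j) := by
      rw [Finset.mul_sum]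
      exact Finset.sum_congr rfl fun j _ => (mul_one_div _ _).symm
    rw [hS]; ring
  rw [Finset.sum_congr rfl (fun i _ => h i), Finset.sum_add_distrib, ← Finset.mul_sum,
    Finset.sum_neg_distrib, Finset.sum_sub_distrib]

lemma grad_ineq (hN : 0 < G.edgeFinset.card) {c : ℝ} (hc : 0 < c) {x y : Fin m → ℝ}
    (hx : x ∈ simplexDelta G c) (hy : y ∈ simplexDelta G c) :
    polyaL G y ≤ polyaL G x + ∑ i, (y i - x i) * partialL G x i := by
  classical
  rw [grad_identity]
  unfold polyaL
  rw [hx.2.1, hy.2.1]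
  have hterm : ∀ e ∈ G.edgeFinset,
      Sym2.lift ⟨fun i j => Real.log (y i + y j), fun i j => by simp [add_comm]⟩ e
        - Sym2.lift ⟨fun i j => Real.log (x i + x j), fun i j => by simp [add_comm]⟩ e
      ≤ Sym2.lift ⟨fun i j => ((y i + y j) - (x i + x j)) / (x i + x j),
            fun i j => by simp [add_comm]⟩ e := by
    intro e he
    rw [SimpleGraph.mem_edgeFinset] at he
    induction e with
    | _ i j =>
      have hpx : 0 < x i + x j := pair_pos hc hx he
      have hpy : 0 < y i + y j := pair_pos hc hy he
      rw [Sym2.lift_mk, Sym2.lift_mk, Sym2.lift_mk]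
      simp only
      have h1 : Real.log (y i + y j) - Real.log (x i + x j)
          = Real.log ((y i + y j) / (x i + x j)) := by
        rw [Real.log_div hpy.ne' hpx.ne']
      have h2 : Real.log ((y i + y j) / (x i + x j)) ≤ (y i + y j) / (x i + x j) - 1 :=
        Real.log_le_sub_one_of_pos (by positivity)
      rw [h1, sub_div, div_self hpx.ne'] at *
      linarith
  have hsum : ∑ e ∈ G.edgeFinset,
        Sym2.lift ⟨fun i j => Real.log (y i + y j), fun i j => by simp [add_comm]⟩ e
      - ∑ e ∈ G.edgeFinset,
        Sym2.lift ⟨fun i j => Real.log (x i + x j), fun i j => by simp [add_comm]⟩ e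
      ≤ ∑ e ∈ G.edgeFinset,
          Sym2.lift ⟨fun i j => ((y i + y j) - (x i + x j)) / (x i + x j),
            fun i j => by simp [add_comm]⟩ e := by
    rw [← Finset.sum_sub_distrib]
    exact Finset.sum_le_sum hterm
  have hNpos : (0:ℝ) < 1 / (G.edgeFinset.card : ℝ) := by positivity
  nlinarith [mul_le_mul_of_nonneg_left hsum hNpos.le]

lemma grad_strict (hN : 0 < G.edgeFinset.card) {c : ℝ} (hc : 0 < c) {x y : Fin m → ℝ}
    (hx : x ∈ simplexDelta G c) (hy : y ∈ simplexDelta G c)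
    {i₀ j₀ : Fin m} (hadj : G.Adj i₀ j₀) (hne : y i₀ + y j₀ ≠ x i₀ + x j₀) :
    polyaL G y < polyaL G x + ∑ i, (y i - x i) * partialL G x i := by
  classical
  rw [grad_identity]
  unfold polyaL
  rw [hx.2.1, hy.2.1]
  have hterm : ∀ e ∈ G.edgeFinset,
      Sym2.lift ⟨fun i j => Real.log (y i + y j), fun i j => by simp [add_comm]⟩ e
        - Sym2.lift ⟨fun i j => Real.log (x i + x j), fun i j => by simp [add_comm]⟩ e
      ≤ Sym2.lift ⟨fun i j => ((y i + y j) - (x i + x j)) / (x i + x j),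
            fun i j => by simp [add_comm]⟩ e := by
    intro e he
    rw [SimpleGraph.mem_edgeFinset] at he
    induction e with
    | _ i j =>
      have hpx : 0 < x i + x j := pair_pos hc hx he
      have hpy : 0 < y i + y j := pair_pos hc hy he
      rw [Sym2.lift_mk, Sym2.lift_mk, Sym2.lift_mk]
      simp only
      have h1 : Real.log (y i + y j) - Real.log (x i + x j)
          = Real.log ((y i + y j) / (x i + x j)) := by
        rw [Real.log_div hpy.ne' hpx.ne']
      have h2 : Real.log ((y i + y j) / (x i + x j)) ≤ (y i + y j) / (x i + x j) - 1 :=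
        Real.log_le_sub_one_of_pos (by positivity)
      rw [h1, sub_div, div_self hpx.ne'] at *
      linarith
  have hstrict : Sym2.lift ⟨fun i j => Real.log (y i + y j), fun i j => by simp [add_comm]⟩
        (s(i₀, j₀))
        - Sym2.lift ⟨fun i j => Real.log (x i + x j), fun i j => by simp [add_comm]⟩
        (s(i₀, j₀))
      < Sym2.lift ⟨fun i j => ((y i + y j) - (x i + x j)) / (x i + x j),
            fun i j => by simp [add_comm]⟩ (s(i₀, j₀)) := by
    have hpx : 0 < x i₀ + x j₀ := pair_pos hc hx hadj
    have hpy : 0 < y i₀ + y j₀ := pair_pos hc hy hadj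
    rw [Sym2.lift_mk, Sym2.lift_mk, Sym2.lift_mk]
    simp only
    have h1 : Real.log (y i₀ + y j₀) - Real.log (x i₀ + x j₀)
        = Real.log ((y i₀ + y j₀) / (x i₀ + x j₀)) := by
      rw [Real.log_div hpy.ne' hpx.ne']
    have h2 : Real.log ((y i₀ + y j₀) / (x i₀ + x j₀)) < (y i₀ + y j₀) / (x i₀ + x j₀) - 1 :=
      Real.log_lt_sub_one_of_pos (by positivity)
        (fun h => hne ((div_eq_one_iff_eq hpx.ne').1 h))
    rw [h1, sub_div, div_self hpx.ne'] at *
    linarith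
  have hsum : ∑ e ∈ G.edgeFinset,
        Sym2.lift ⟨fun i j => Real.log (y i + y j), fun i j => by simp [add_comm]⟩ e
      - ∑ e ∈ G.edgeFinset,
        Sym2.lift ⟨fun i j => Real.log (x i + x j), fun i j => by simp [add_comm]⟩ e
      < ∑ e ∈ G.edgeFinset,
          Sym2.lift ⟨fun i j => ((y i + y j) - (x i + x j)) / (x i + x j),
            fun i j => by simp [add_comm]⟩ e := by
    rw [← Finset.sum_sub_distrib]
    refine Finset.sum_lt_sum (fun e he => sub_le_iff_le_add.2 ?_) ⟨s(i₀, j₀),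
      SimpleGraph.mem_edgeFinset.2 hadj, by simpa [sub_lt_iff_lt_add] using hstrict⟩
    have := hterm e he
    linarith
  have hNpos : (0:ℝ) < 1 / (G.edgeFinset.card : ℝ) := by positivity
  nlinarith [mul_lt_mul_of_pos_left hsum hNpos]

end Stage2
section Stage3
open Finset
variable {m : ℕ} {G : SimpleGraph (Fin m)} [DecidableRel G.Adj]

lemma kernel_eq (hconn : G.Connected) (hnbb : ¬ BalancedBipartite G)
    {x w : Fin m → ℝ} (hsum : ∑ i, x i = ∑ i, w i)
    (hpair : ∀ i j, G.Adj i j → x i + x j = w i + w j) : x = w := by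
  classical
  set u : Fin m → ℝ := fun i => x i - w i with hu
  have hedge : ∀ i j, G.Adj i j → u j = -u i := by
    intro i j h
    have := hpair i j h
    simp only [hu]
    linarith
  haveI : Nonempty (Fin m) := hconn.nonempty
  set v₀ : Fin m := Classical.arbitrary (Fin m) with hv₀
  set a : ℝ := u v₀ with ha
  have hwalk : ∀ i j : Fin m, G.Walk i j → (u i = a ∨ u i = -a) → (u j = a ∨ u j = -a) := by
    intro i j p
    induction p with
    | nil => exact id
    | @cons i b j h q ih =>
      rintro (h1 | h1)
      · exact ih (Or.inr (by rw [hedge _ _ h, h1]))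
      · exact ih (Or.inl (by rw [hedge _ _ h, h1, neg_neg]))
  have hall : ∀ i, u i = a ∨ u i = -a := by
    intro i
    obtain ⟨p⟩ := hconn.preconnected v₀ i
    exact hwalk v₀ i p (Or.inl rfl)
  have husum : ∑ i, u i = 0 := by
    simp only [hu, Finset.sum_sub_distrib, hsum, sub_self]
  by_cases hA : a = 0
  · funext i
    have := hall i
    rw [hA] at this
    have hzero : u i = 0 := by rcases this with h | h <;> simpa using h
    have : x i - w i = 0 := hzero
    linarith
  · exfalso
    apply hnbb
    refine ⟨Finset.univ.filter (fun i => u i = a), ?_, ?_⟩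
    · intro i j hadj
      simp only [Finset.mem_filter, Finset.mem_univ, true_and]
      constructor
      · intro hi hj
        rw [hedge i j hadj, hi] at hj
        exact hA (by linarith)
      · intro hj
        have hja : u j = -a := (hall j).resolve_left hj
        have : u j = -u i := hedge i j hadj
        have hia : u i = a := by
          rcases hall i with h | h
          · exact h
          · exfalso; rw [h] at this; apply hj; rw [hja] at this ⊢; linarith
        exact hia
    · have hcompl : ∀ i ∈ (Finset.univ.filter (fun i => u i = a))ᶜ, u i = -a := by
        intro i hi
        simp only [Finset.mem_compl, Finset.mem_filter, Finset.mem_univ, true_and] at hi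
        exact (hall i).resolve_left hi
      have h1 : ∑ i ∈ Finset.univ.filter (fun i => u i = a), u i
          = (Finset.univ.filter (fun i => u i = a)).card * a := by
        rw [Finset.sum_congr rfl (fun i hi => (Finset.mem_filter.1 hi).2), Finset.sum_const,
          nsmul_eq_mul]
      have h2 : ∑ i ∈ (Finset.univ.filter (fun i => u i = a))ᶜ, u i
          = ((Finset.univ.filter (fun i => u i = a))ᶜ.card : ℝ) * (-a) := by
        rw [Finset.sum_congr rfl hcompl, Finset.sum_const, nsmul_eq_mul]
      have h3 := Finset.sum_add_sum_compl (Finset.univ.filter (fun i => u i = a)) u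
      rw [h1, h2, husum] at h3
      have hz : (((Finset.univ.filter (fun i => u i = a)).card : ℝ)
          - ((Finset.univ.filter (fun i => u i = a))ᶜ.card : ℝ)) * a = 0 := by ring_nf; linarith
      have := sub_eq_zero.1 ((mul_eq_zero.1 hz).resolve_right hA)
      exact_mod_cast this

lemma g_supp {c : ℝ} {w : Fin m → ℝ} (hw : w ∈ equilibria G c) {i : Fin m}
    (hwi : w i ≠ 0) : partialL G w i = 0 := by
  have h0 : polyaF G w i = 0 := by rw [hw.2]; rfl
  rw [F_eq_mul] at h0
  exact (mul_eq_zero.1 h0).resolve_left hwi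

end Stage3
section Stage4
open Finset ContinuousLinearMap
variable {m : ℕ} {G : SimpleGraph (Fin m)} [DecidableRel G.Adj]

lemma unstable_of_pos {c : ℝ} (hc : 0 < c) {w : Fin m → ℝ} (hwΔ : w ∈ simplexDelta G c)
    {k : Fin m} (hk : w k = 0) (hg : 0 < partialL G w k) : Unstable G w := by
  classical
  have hder : HasFDerivAt (fun x : Fin m → ℝ => polyaF G x k)
      ((-1 + 1 / (G.edgeFinset.card : ℝ) * ∑ j ∈ G.neighborFinset k, (w j)⁻¹) •
        (ContinuousLinearMap.proj k : ((Fin m) → ℝ) →L[ℝ] ℝ)) w := by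
    have hterm : ∀ j ∈ G.neighborFinset k,
        HasFDerivAt (fun x : Fin m → ℝ => x k / (x k + x j))
          ((w j)⁻¹ • (ContinuousLinearMap.proj k : ((Fin m) → ℝ) →L[ℝ] ℝ)) w := by
      intro j hj
      have hadj : G.Adj k j := (SimpleGraph.mem_neighborFinset G k j).1 hj
      have hp : 0 < w k + w j := pair_pos hc hwΔ hadj
      have h1 : HasFDerivAt (fun x : Fin m → ℝ => x k)
          (ContinuousLinearMap.proj k : ((Fin m) → ℝ) →L[ℝ] ℝ) w := by
        exact (ContinuousLinearMap.proj k :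
          ((Fin m) → ℝ) →L[ℝ] ℝ).hasFDerivAt
      have h2 : HasFDerivAt (fun x : Fin m → ℝ => x k + x j)
          ((ContinuousLinearMap.proj k : ((Fin m) → ℝ) →L[ℝ] ℝ) + ContinuousLinearMap.proj j)
          w := h1.add (ContinuousLinearMap.proj j :
            ((Fin m) → ℝ) →L[ℝ] ℝ).hasFDerivAt
      have hinv : HasFDerivAt (fun x : Fin m → ℝ => (x k + x j)⁻¹)
          ((ContinuousLinearMap.smulRight (1 : ℝ →L[ℝ] ℝ) (-((w k + w j) ^ 2)⁻¹)).comp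
            ((ContinuousLinearMap.proj k : ((Fin m) → ℝ) →L[ℝ] ℝ) +
              ContinuousLinearMap.proj j)) w :=
        (hasFDerivAt_inv hp.ne').comp w h2
      have hmul := h1.mul hinv
      have : (fun x : Fin m → ℝ => x k / (x k + x j))
          = fun x : Fin m → ℝ => x k * (x k + x j)⁻¹ := by
        funext x; rw [div_eq_mul_inv]
      rw [this]
      refine hmul.congr_fderiv ?_
      ext y
      simp only [ContinuousLinearMap.add_apply, ContinuousLinearMap.smul_apply,
        ContinuousLinearMap.coe_comp', Function.comp_apply, ContinuousLinearMap.proj_apply,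
        ContinuousLinearMap.smulRight_apply, ContinuousLinearMap.one_apply, smul_eq_mul, hk]
      simp
    have hsum : HasFDerivAt (fun x : Fin m → ℝ =>
        ∑ j ∈ G.neighborFinset k, x k / (x k + x j))
        (∑ j ∈ G.neighborFinset k,
          (w j)⁻¹ • (ContinuousLinearMap.proj k : ((Fin m) → ℝ) →L[ℝ] ℝ)) w :=
      HasFDerivAt.fun_sum hterm
    have hF : HasFDerivAt (fun x : Fin m → ℝ => polyaF G x k)
        (-(ContinuousLinearMap.proj k : ((Fin m) → ℝ) →L[ℝ] ℝ) +
          (1 / (G.edgeFinset.card : ℝ)) • ∑ j ∈ G.neighborFinset k,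
            (w j)⁻¹ • (ContinuousLinearMap.proj k : ((Fin m) → ℝ) →L[ℝ] ℝ)) w := by
      exact ((ContinuousLinearMap.proj k :
        ((Fin m) → ℝ) →L[ℝ] ℝ).hasFDerivAt.neg).add
        (hsum.const_mul (1 / (G.edgeFinset.card : ℝ)))
    convert hF using 1
    ext y
    simp only [ContinuousLinearMap.add_apply, ContinuousLinearMap.smul_apply,
      ContinuousLinearMap.neg_apply, ContinuousLinearMap.proj_apply,
      ContinuousLinearMap.sum_apply, smul_eq_mul, Finset.sum_apply]
    rw [← Finset.sum_mul]
    ring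
  have hpl : partialL G w k
      = -1 + 1 / (G.edgeFinset.card : ℝ) * ∑ j ∈ G.neighborFinset k, (w j)⁻¹ := by
    unfold partialL
    congr 1
    congr 1
    refine Finset.sum_congr rfl fun j _ => ?_
    rw [hk, zero_add, one_div]
  have hrow : ∀ j, polyaJacobian G w k j = if j = k then partialL G w k else 0 := by
    intro j
    show fderiv ℝ (fun x => polyaF G x k) w (Pi.single j 1) = _
    rw [hder.fderiv]
    simp only [ContinuousLinearMap.smul_apply, ContinuousLinearMap.proj_apply, smul_eq_mul]
    rw [Pi.single_apply]
    rcases eq_or_ne j k with h | h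
    · subst h; simp [hpl]
    · rw [if_neg (fun hkj : k = j => h hkj.symm), if_neg h, mul_zero]
  refine ⟨(partialL G w k : ℝ), ?_, by simpa using hg⟩
  rw [spectrum.mem_iff]
  intro hunit
  have hdet : (algebraMap ℂ (Matrix (Fin m) (Fin m) ℂ) (partialL G w k) -
      (polyaJacobian G w).map Complex.ofReal).det = 0 := by
    apply Matrix.det_eq_zero_of_row_eq_zero k
    intro j
    simp only [Matrix.sub_apply, Matrix.map_apply, Matrix.algebraMap_matrix_apply, hrow]
    by_cases h : j = k
    · subst h; simp
    · rw [if_neg h]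
      rw [if_neg (fun hkj : k = j => h hkj.symm)]
      simp
  have := (Matrix.isUnit_iff_isUnit_det _).1 hunit
  rw [hdet] at this
  exact (not_isUnit_zero : ¬ IsUnit (0 : ℂ)) this

end Stage4
section Stage5
open Finset
variable {m : ℕ} {G : SimpleGraph (Fin m)} [DecidableRel G.Adj]

lemma sum_grad_w_nonpos (hN : 0 < G.edgeFinset.card) {c : ℝ} (hc0 : 0 < c)
    {w : Fin m → ℝ} (hw : w ∈ equilibria G c) (hwu : ¬ Unstable G w)
    {x : Fin m → ℝ} (hx : x ∈ simplexDelta G c) :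
    ∑ i, (x i - w i) * partialL G w i ≤ 0 := by
  apply Finset.sum_nonpos
  intro i _
  by_cases hwi : w i = 0
  · have hg : partialL G w i ≤ 0 := by
      by_contra hpos
      push_neg at hpos
      exact hwu (unstable_of_pos hc0 hw.1 hwi hpos)
    have hxi : 0 ≤ x i := hx.1 i
    rw [hwi, sub_zero]
    exact mul_nonpos_of_nonneg_of_nonpos hxi hg
  · rw [g_supp hw hwi, mul_zero]

lemma L_le_L_w (hN : 0 < G.edgeFinset.card) {c : ℝ} (hc0 : 0 < c)
    {w : Fin m → ℝ} (hw : w ∈ equilibria G c) (hwu : ¬ Unstable G w)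
    {x : Fin m → ℝ} (hx : x ∈ simplexDelta G c) :
    polyaL G x ≤ polyaL G w := by
  have h1 := grad_ineq hN hc0 hw.1 hx
  have h2 := sum_grad_w_nonpos hN hc0 hw hwu hx
  linarith

lemma L_lt_L_w (hN : 0 < G.edgeFinset.card) (hconn : G.Connected)
    (hnbb : ¬ BalancedBipartite G) {c : ℝ} (hc0 : 0 < c)
    {w : Fin m → ℝ} (hw : w ∈ equilibria G c) (hwu : ¬ Unstable G w)
    {x : Fin m → ℝ} (hx : x ∈ simplexDelta G c) (hxw : x ≠ w) :
    polyaL G x < polyaL G w := by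
  have hpair : ¬ ∀ i j, G.Adj i j → x i + x j = w i + w j := by
    intro hpair
    exact hxw (kernel_eq hconn hnbb (by rw [hx.2.1, hw.1.2.1]) hpair)
  push_neg at hpair
  obtain ⟨i₀, j₀, hadj, hne⟩ := hpair
  have h1 := grad_strict hN hc0 hw.1 hx hadj hne
  have h2 := sum_grad_w_nonpos hN hc0 hw hwu hx
  linarith

/-- helper: monotonicity from pointwise derivatives on `[0, ∞)` -/
lemma monoOn_of_hasDerivAt {f g : ℝ → ℝ} (hf : ∀ t : ℝ, 0 ≤ t → HasDerivAt f (g t) t)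
    (hg : ∀ t : ℝ, 0 ≤ t → 0 ≤ g t) : MonotoneOn f (Set.Ici 0) := by
  apply monotoneOn_of_deriv_nonneg (convex_Ici 0)
  · intro t ht
    exact (hf t ht).continuousAt.continuousWithinAt
  · intro t ht
    rw [interior_Ici] at ht
    exact (hf t (le_of_lt ht)).differentiableAt.differentiableWithinAt
  · intro t ht
    rw [interior_Ici] at ht
    rw [(hf t (le_of_lt ht)).deriv]
    exact hg t (le_of_lt ht)

/-- general version of the gradient identity, for any "direction" `d` -/
lemma sum_mul_partialL (x d : Fin m → ℝ) :
    ∑ i, d i * partialL G x i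
      = -(∑ i, d i) + (1 / (G.edgeFinset.card : ℝ)) *
        ∑ e ∈ G.edgeFinset,
          Sym2.lift ⟨fun i j => (d i + d j) / (x i + x j),
            fun i j => by simp [add_comm]⟩ e := by
  classical
  have key : ∑ i, ∑ j ∈ G.neighborFinset i, d i / (x i + x j)
      = ∑ e ∈ G.edgeFinset,
          Sym2.lift ⟨fun i j => (d i + d j) / (x i + x j),
            fun i j => by simp [add_comm]⟩ e := by
    rw [edge_sum_aux G (fun i j => d i / (x i + x j))]
    refine Finset.sum_congr rfl fun e _ => ?_
    induction e with
    | _ i j =>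
      rw [Sym2.lift_mk, Sym2.lift_mk]
      simp only
      rw [add_comm (x j) (x i), ← add_div]
  rw [← key]
  unfold partialL
  have h : ∀ i, d i * (-1 + 1 / (G.edgeFinset.card : ℝ) *
        ∑ j ∈ G.neighborFinset i, 1 / (x i + x j))
      = -d i + 1 / (G.edgeFinset.card : ℝ) *
        ∑ j ∈ G.neighborFinset i, d i / (x i + x j) := by
    intro i
    have hS : ∑ j ∈ G.neighborFinset i, d i / (x i + x j)
        = d i * ∑ j ∈ G.neighborFinset i, 1 / (x i + x j) := by
      rw [Finset.mul_sum]
      exact Finset.sum_congr rfl fun j _ => (mul_one_div _ _).symm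
    rw [hS]; ring
  rw [Finset.sum_congr rfl (fun i _ => h i), Finset.sum_add_distrib, ← Finset.mul_sum,
    Finset.sum_neg_distrib]

end Stage5
section Stage6
open Finset
variable {m : ℕ} {G : SimpleGraph (Fin m)} [DecidableRel G.Adj]

lemma isClosed_simplexDelta (G : SimpleGraph (Fin m)) (c : ℝ) :
    IsClosed (simplexDelta G c) := by
  classical
  have h1 : IsClosed {x : Fin m → ℝ | ∀ i, 0 ≤ x i} := by
    have : {x : Fin m → ℝ | ∀ i, 0 ≤ x i} = ⋂ i, {x : Fin m → ℝ | 0 ≤ x i} := by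
      ext x; simp
    rw [this]
    exact isClosed_iInter fun i => isClosed_le continuous_const (continuous_apply i)
  have h2 : IsClosed {x : Fin m → ℝ | ∑ i, x i = 1} :=
    isClosed_eq (by fun_prop) continuous_const
  have h3 : IsClosed {x : Fin m → ℝ | ∀ i j, G.Adj i j → c ≤ x i + x j} := by
    have : {x : Fin m → ℝ | ∀ i j, G.Adj i j → c ≤ x i + x j}
        = ⋂ i, ⋂ j, {x : Fin m → ℝ | G.Adj i j → c ≤ x i + x j} := by
      ext x; simp
    rw [this]
    refine isClosed_iInter fun i => isClosed_iInter fun j => ?_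
    by_cases hij : G.Adj i j
    · have : {x : Fin m → ℝ | G.Adj i j → c ≤ x i + x j}
          = {x : Fin m → ℝ | c ≤ x i + x j} := by
        ext x; simp [hij]
      rw [this]
      exact isClosed_le continuous_const ((continuous_apply i).add (continuous_apply j))
    · have : {x : Fin m → ℝ | G.Adj i j → c ≤ x i + x j} = Set.univ := by
        ext x; simp [hij]
      rw [this]
      exact isClosed_univ
  have : simplexDelta G c
      = {x : Fin m → ℝ | ∀ i, 0 ≤ x i} ∩ ({x : Fin m → ℝ | ∑ i, x i = 1}
        ∩ {x : Fin m → ℝ | ∀ i j, G.Adj i j → c ≤ x i + x j}) := rfl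
  rw [this]
  exact h1.inter (h2.inter h3)

lemma continuousOn_polyaL {c : ℝ} (hc0 : 0 < c) :
    ContinuousOn (polyaL G) (simplexDelta G c) := by
  classical
  unfold polyaL
  apply ContinuousOn.add
  · exact (Continuous.neg (by fun_prop)).continuousOn
  · apply ContinuousOn.mul continuousOn_const
    apply continuousOn_finset_sum
    intro e he
    rw [SimpleGraph.mem_edgeFinset] at he
    induction e with
    | _ i j =>
      have hadj : G.Adj i j := he
      simp only [Sym2.lift_mk]
      apply ContinuousOn.log
      · exact ((continuous_apply i).add (continuous_apply j)).continuousOn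
      · intro x hx
        exact (pair_pos hc0 hx hadj).ne'

end Stage6
end GPU

namespace GPU
open Finset

/-- If `G` is finite, connected and not balanced-bipartite and
`w ∈ Λ` is a non-unstable equilibrium, then every solution of `dv/dt = F(v)` in `Δ`
starting at a point with all coordinates strictly positive converges to `w`. -/
theorem ode_converges_to_non_unstable_equilibrium
    (m : ℕ) (G : SimpleGraph (Fin m)) [DecidableRel G.Adj]
    (hconn : G.Connected) (hnbb : ¬ BalancedBipartite G)
    (c : ℝ) (hc0 : 0 < c) (hc1 : c < 1 / (G.edgeFinset.card : ℝ))
    (w : Fin m → ℝ) (hw : w ∈ equilibria G c) (hwu : ¬ Unstable G w)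
    (v : ℝ → Fin m → ℝ) (hv0 : ∀ i, 0 < v 0 i)
    (hv_mem : ∀ t : ℝ, 0 ≤ t → v t ∈ simplexDelta G c)
    (hv_ode : ∀ t : ℝ, 0 ≤ t → HasDerivAt v (polyaF G (v t)) t) :
    Tendsto v atTop (𝓝 w) := by
  classical
  have hN : 0 < G.edgeFinset.card := by
    rcases Nat.eq_zero_or_pos G.edgeFinset.card with h | h
    · rw [h] at hc1; norm_num at hc1; linarith
    · exact h
  have hvd : ∀ t : ℝ, 0 ≤ t → ∀ i, HasDerivAt (fun s => v s i) (polyaF G (v t) i) t :=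
    fun t ht i => hasDerivAt_pi.1 (hv_ode t ht) i
  -- positivity of the trajectory
  have hpos : ∀ t : ℝ, 0 ≤ t → ∀ i, 0 < v t i := by
    intro t ht i
    have hmono : MonotoneOn (fun s => Real.exp s * v s i) (Set.Ici 0) := by
      apply monoOn_of_hasDerivAt
        (g := fun s => Real.exp s * v s i + Real.exp s * polyaF G (v s) i)
      · intro s hs
        exact (Real.hasDerivAt_exp s).mul (hvd s hs i)
      · intro s hs
        have hsum : 0 ≤ ∑ j ∈ G.neighborFinset i, v s i / (v s i + v s j) := by
          apply Finset.sum_nonneg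
          intro j hj
          have hadj : G.Adj i j := (SimpleGraph.mem_neighborFinset G i j).1 hj
          exact div_nonneg ((hv_mem s hs).1 i) (pair_pos hc0 (hv_mem s hs) hadj).le
        have hone : (0:ℝ) ≤ 1 / (G.edgeFinset.card : ℝ) := by positivity
        have hFi : 0 ≤ v s i + polyaF G (v s) i := by
          unfold polyaF
          nlinarith
        nlinarith [Real.exp_pos s]
    have h0 := hmono Set.self_mem_Ici (Set.mem_Ici.2 ht) ht
    simp only [Real.exp_zero, one_mul] at h0
    nlinarith [Real.exp_pos t, hv0 i]
  have hle1 : ∀ t : ℝ, 0 ≤ t → ∀ i, v t i ≤ 1 := by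
    intro t ht i
    have := Finset.single_le_sum (f := fun j => v t j)
      (fun j _ => (hv_mem t ht).1 j) (Finset.mem_univ i)
    rwa [(hv_mem t ht).2.1] at this
  -- monotonicity of the Lyapunov function along the trajectory
  have hLmono : MonotoneOn (fun t => polyaL G (v t)) (Set.Ici 0) := by
    apply monoOn_of_hasDerivAt
      (g := fun t => ∑ i, polyaF G (v t) i * partialL G (v t) i)
    · intro t ht
      have hedge : ∀ e ∈ G.edgeFinset, HasDerivAt
          (fun s => Sym2.lift ⟨fun i j => Real.log (v s i + v s j),
            fun i j => by simp [add_comm]⟩ e)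
          (Sym2.lift ⟨fun i j => (polyaF G (v t) i + polyaF G (v t) j) / (v t i + v t j),
            fun i j => by simp [add_comm]⟩ e) t := by
        intro e he
        rw [SimpleGraph.mem_edgeFinset] at he
        induction e with
        | _ i j =>
          have hadj : G.Adj i j := he
          have hp : 0 < v t i + v t j := pair_pos hc0 (hv_mem t ht) hadj
          have hpair : HasDerivAt (fun s => v s i + v s j)
              (polyaF G (v t) i + polyaF G (v t) j) t := (hvd t ht i).add (hvd t ht j)
          have hlog := (Real.hasDerivAt_log hp.ne').comp t hpair
          simp only [Sym2.lift_mk]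
          rw [div_eq_inv_mul]
          exact hlog
      have hsum2 := HasDerivAt.fun_sum hedge
      have hsum1 : HasDerivAt (fun s => ∑ i, v s i) (∑ i, polyaF G (v t) i) t :=
        HasDerivAt.fun_sum (fun i _ => hvd t ht i)
      have hL : HasDerivAt (fun s => polyaL G (v s))
          (-∑ i, polyaF G (v t) i + (1 / (G.edgeFinset.card : ℝ)) *
            ∑ e ∈ G.edgeFinset,
              Sym2.lift ⟨fun i j => (polyaF G (v t) i + polyaF G (v t) j) / (v t i + v t j),
                fun i j => by simp [add_comm]⟩ e) t := by
        simp only [polyaL]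
        exact hsum1.neg.add (HasDerivAt.const_mul (1 / (G.edgeFinset.card : ℝ)) hsum2)
      have hid := sum_mul_partialL (G := G) (v t) (polyaF G (v t))
      rw [hid]
      exact hL
    · intro t ht
      apply Finset.sum_nonneg
      intro i _
      rw [F_eq_mul, mul_assoc]
      exact mul_nonneg ((hv_mem t ht).1 i) (mul_self_nonneg _)
  -- the auxiliary function V
  set V : ℝ → ℝ := fun t => ∑ i, w i * Real.log (v t i) with hV
  have hVd : ∀ t : ℝ, 0 ≤ t → HasDerivAt V (∑ i, w i * partialL G (v t) i) t := by
    intro t ht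
    apply HasDerivAt.fun_sum
    intro i _
    have hlog := (Real.hasDerivAt_log (hpos t ht i).ne').comp t (hvd t ht i)
    have heq : (v t i)⁻¹ * polyaF G (v t) i = partialL G (v t) i := by
      rw [F_eq_mul, inv_mul_eq_div, mul_comm, mul_div_assoc, div_self (hpos t ht i).ne',
        mul_one]
    have h2 := HasDerivAt.const_mul (w i) hlog
    rw [heq] at h2
    exact h2
  have hVlb : ∀ t : ℝ, 0 ≤ t →
      polyaL G w - polyaL G (v t) ≤ ∑ i, w i * partialL G (v t) i := by
    intro t ht
    have hgi := grad_ineq hN hc0 (hv_mem t ht) hw.1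
    have hsplit : ∑ i, (w i - v t i) * partialL G (v t) i
        = ∑ i, w i * partialL G (v t) i - ∑ i, v t i * partialL G (v t) i := by
      rw [← Finset.sum_sub_distrib]
      exact Finset.sum_congr rfl fun i _ => by ring
    have hzero : ∑ i, v t i * partialL G (v t) i = 0 := by
      have hs := sum_F hN hc0 (hv_mem t ht)
      rw [← hs]
      exact Finset.sum_congr rfl fun i _ => (F_eq_mul _ _).symm
    rw [hsplit, hzero] at hgi
    linarith
  -- claim: L (v t) eventually exceeds L w - δ
  have hC : ∀ δ : ℝ, 0 < δ → ∃ t₁, 0 ≤ t₁ ∧ polyaL G w - δ < polyaL G (v t₁) := by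
    intro δ hδ
    by_contra hcon
    push_neg at hcon
    have hWmono : MonotoneOn (fun t => V t - δ * t) (Set.Ici 0) := by
      apply monoOn_of_hasDerivAt
        (g := fun t => (∑ i, w i * partialL G (v t) i) - δ)
      · intro t ht
        have hlin : HasDerivAt (fun s : ℝ => δ * s) δ t := by
          simpa using HasDerivAt.const_mul δ (hasDerivAt_id t)
        exact (hVd t ht).sub hlin
      · intro t ht
        have h1 := hVlb t ht
        have h2 := hcon t ht
        linarith
    have hVle : ∀ t : ℝ, 0 ≤ t → V t ≤ 0 := by
      intro t ht
      apply Finset.sum_nonpos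
      intro i _
      exact mul_nonpos_of_nonneg_of_nonpos (hw.1.1 i)
        (Real.log_nonpos (hpos t ht i).le (hle1 t ht i))
    have hV00 : V 0 ≤ 0 := hVle 0 le_rfl
    set T : ℝ := (1 - V 0) / δ with hT
    have hT0 : 0 ≤ T := div_nonneg (by linarith) hδ.le
    have hmono := hWmono Set.self_mem_Ici (Set.mem_Ici.2 hT0) hT0
    have hdT : δ * T = 1 - V 0 := by
      rw [hT]
      field_simp
    have hVT := hVle T hT0
    simp only [mul_zero, sub_zero] at hmono
    linarith
  -- conclusion via compactness
  rw [Metric.tendsto_atTop]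
  intro ε hε
  set K : Set (Fin m → ℝ) := {x | x ∈ simplexDelta G c ∧ ε ≤ dist x w} with hKdef
  by_cases hKe : K.Nonempty
  · have hKcl : IsClosed K := by
      have : K = simplexDelta G c ∩ {x | ε ≤ dist x w} := rfl
      rw [this]
      exact (isClosed_simplexDelta G c).inter
        (isClosed_le continuous_const (Continuous.dist continuous_id continuous_const))
    have hKb : Bornology.IsBounded K := by
      apply (Metric.isBounded_closedBall (x := (0 : Fin m → ℝ)) (r := 1)).subset
      intro x hx
      rw [Metric.mem_closedBall, dist_zero_right]
      rw [pi_norm_le_iff_of_nonneg zero_le_one]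
      intro i
      rw [Real.norm_eq_abs, abs_le]
      have h0 : 0 ≤ x i := hx.1.1 i
      have h1 : x i ≤ 1 := by
        have := Finset.single_le_sum (f := fun j => x j)
          (fun j _ => hx.1.1 j) (Finset.mem_univ i)
        rwa [hx.1.2.1] at this
      constructor <;> linarith
    have hKcomp : IsCompact K := Metric.isCompact_of_isClosed_isBounded hKcl hKb
    obtain ⟨x₀, hx₀K, hmax⟩ := hKcomp.exists_isMaxOn hKe
      ((continuousOn_polyaL hc0).mono (fun x hx => hx.1))
    have hx₀ne : x₀ ≠ w := by
      intro h
      rw [h] at hx₀K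
      have := hx₀K.2
      simp at this
      linarith
    have hδ : 0 < polyaL G w - polyaL G x₀ :=
      sub_pos.2 (L_lt_L_w hN hconn hnbb hc0 hw hwu hx₀K.1 hx₀ne)
    obtain ⟨t₁, ht₁0, ht₁⟩ := hC _ hδ
    refine ⟨t₁, fun t hts => ?_⟩
    have ht : 0 ≤ t := le_trans ht₁0 hts
    have hLt : polyaL G x₀ < polyaL G (v t) := by
      have := hLmono (Set.mem_Ici.2 ht₁0) (Set.mem_Ici.2 ht) hts
      simp only at this
      linarith
    by_contra hge
    push_neg at hge
    have hvtK : v t ∈ K := ⟨hv_mem t ht, hge⟩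
    exact absurd (hmax hvtK) (not_le.2 hLt)
  · refine ⟨0, fun t ht => ?_⟩
    by_contra hge
    push_neg at hge
    exact hKe ⟨v t, hv_mem t ht, hge⟩

end GPU
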